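/- For every p > 0 and every n ∈ ℕ, the set ℓ^p \ ⋃_{0<q<p} ℓ^q is (n, 𝔠)-spaceable in ℓ^p; that is, for every n-dimensional subspace W of ℓ^p with W \ {0} ⊆ ℓ^p \ ⋃_{0<q<p} ℓ^q, there exists a closed subspace W' of ℓ^p of dimension 𝔠 (the cardinality of the continuum) with W ⊆ W' and W' \ {0} ⊆ ℓ^p \ ⋃_{0<q<p} ℓ^q. -/

import Mathlib

open Filter Topology

/-- Membership in the sequence space ℓ^q: `∑ |x j|^q < ∞`. -/
def MemSeqLp (q : ℝ) (x : ℕ → ℝ) : Prop := Summable fun j => |x j| ^ q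

/-- The set `ℓ^p \ ⋃_{0<q<p} ℓ^q` inside the space of sequences. -/
def ExoticSet (p : ℝ) : Set (ℕ → ℝ) :=
  {x | MemSeqLp p x ∧ ∀ q : ℝ, 0 < q → q < p → ¬ MemSeqLp q x}

/-- Convergence of a sequence of sequences in the ℓ^p (quasi-)metric:
`∑ |g k j - w j|^p → 0`. -/
def LpTendsto (p : ℝ) (g : ℕ → ℕ → ℝ) (w : ℕ → ℝ) : Prop :=
  Tendsto (fun k => ∑' j, |g k j - w j| ^ p) atTop (nhds 0)

/-- A submodule of sequences is closed in ℓ^p if it contains every ℓ^p-limit (lying in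
ℓ^p) of its elements. -/
def LpClosed (p : ℝ) (W : Submodule ℝ (ℕ → ℝ)) : Prop :=
  ∀ g : ℕ → ℕ → ℝ, (∀ k, g k ∈ W) → ∀ w : ℕ → ℝ, MemSeqLp p w → LpTendsto p g w → w ∈ W


lemma memSeqLp_zero {p : ℝ} (hp : 0 < p) : MemSeqLp p 0 := by
  unfold MemSeqLp
  simp only [Pi.zero_apply, abs_zero, Real.zero_rpow hp.ne']
  exact summable_zero

lemma abs_add_rpow_le {p : ℝ} (hp : 0 < p) (a b : ℝ) :
    |a + b| ^ p ≤ 2 ^ p * (|a| ^ p + |b| ^ p) := by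
  have h1 : |a + b| ≤ 2 * max |a| |b| := by
    calc |a + b| ≤ |a| + |b| := abs_add_le a b
    _ ≤ 2 * max |a| |b| := by
      rcases le_total |a| |b| with h | h
      · rw [max_eq_right h]; linarith
      · rw [max_eq_left h]; linarith
  calc |a + b| ^ p ≤ (2 * max |a| |b|) ^ p :=
        Real.rpow_le_rpow (abs_nonneg _) h1 hp.le
    _ = 2 ^ p * (max |a| |b|) ^ p := by
        rw [Real.mul_rpow (by norm_num) (le_max_iff.2 (Or.inl (abs_nonneg _)))]
    _ ≤ 2 ^ p * (|a| ^ p + |b| ^ p) := by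
        gcongr
        rcases le_total |a| |b| with h | h
        · rw [max_eq_right h]
          nlinarith [Real.rpow_nonneg (abs_nonneg a) p]
        · rw [max_eq_left h]
          nlinarith [Real.rpow_nonneg (abs_nonneg b) p]

lemma MemSeqLp.add {p : ℝ} (hp : 0 < p) {x y : ℕ → ℝ} (hx : MemSeqLp p x)
    (hy : MemSeqLp p y) : MemSeqLp p (x + y) := by
  refine Summable.of_nonneg_of_le (fun j => Real.rpow_nonneg (abs_nonneg _) _)
    (fun j => ?_) ((Summable.add hx hy).mul_left ((2:ℝ) ^ p))
  exact abs_add_rpow_le hp (x j) (y j)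

lemma MemSeqLp.smul {p : ℝ} {x : ℕ → ℝ} (hx : MemSeqLp p x) (c : ℝ) :
    MemSeqLp p (c • x) := by
  have : (fun j => |(c • x) j| ^ p) = fun j => |c| ^ p * |x j| ^ p := by
    funext j
    simp only [Pi.smul_apply, smul_eq_mul, abs_mul]
    exact Real.mul_rpow (abs_nonneg _) (abs_nonneg _)
  rw [MemSeqLp, this]
  exact hx.mul_left _

lemma MemSeqLp.neg {p : ℝ} {x : ℕ → ℝ} (hx : MemSeqLp p x) : MemSeqLp p (-x) := by
  have : (fun j => |(-x) j| ^ p) = fun j => |x j| ^ p := by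
    funext j; simp
  rwa [MemSeqLp, this]

lemma MemSeqLp.sub {p : ℝ} (hp : 0 < p) {x y : ℕ → ℝ} (hx : MemSeqLp p x)
    (hy : MemSeqLp p y) : MemSeqLp p (x - y) := by
  rw [sub_eq_add_neg]
  exact MemSeqLp.add hp hx hy.neg


lemma log_le_rpow_div' {x ε : ℝ} (hx : 0 < x) (hε : 0 < ε) :
    Real.log x ≤ x ^ ε / ε := by
  have h := Real.log_le_sub_one_of_pos (Real.rpow_pos_of_pos hx ε)
  rw [Real.log_rpow hx] at h
  rw [le_div_iff₀ hε]
  nlinarith [Real.rpow_pos_of_pos hx ε]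

noncomputable def motherSeq : ℕ → ℝ := fun n => 1 / (((n:ℝ) + 2) * Real.log ((n:ℝ) + 2) ^ 2)

lemma motherSeq_pos (n : ℕ) : 0 < motherSeq n := by
  have h0 : (0:ℝ) ≤ (n:ℝ) := n.cast_nonneg
  have h1 : (1:ℝ) < (n:ℝ) + 2 := by linarith
  have h2 : 0 < Real.log ((n:ℝ) + 2) := Real.log_pos h1
  unfold motherSeq
  positivity

lemma summable_motherSeq : Summable motherSeq := by
  set f : ℕ → ℝ := fun n => 1 / (((n:ℝ) + 1) * Real.log ((n:ℝ) + 1) ^ 2) with hf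
  have hnonneg : ∀ n, 0 ≤ f n := by
    intro n
    have : 0 ≤ Real.log ((n:ℝ) + 1) := Real.log_nonneg (by push_cast; linarith)
    positivity
  have hmono : ∀ ⦃m n : ℕ⦄, 0 < m → m ≤ n → f n ≤ f m := by
    intro m n hm hmn
    have hm1 : (1:ℝ) ≤ (m:ℝ) := by exact_mod_cast hm
    have h1 : (1:ℝ) < (m:ℝ) + 1 := by linarith
    have hLm : 0 < Real.log ((m:ℝ) + 1) := Real.log_pos h1
    have hmn' : (m:ℝ) ≤ (n:ℝ) := by exact_mod_cast hmn
    have hLmn : Real.log ((m:ℝ) + 1) ≤ Real.log ((n:ℝ) + 1) :=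
      Real.log_le_log (by linarith) (by linarith)
    apply one_div_le_one_div_of_le
    · positivity
    · apply mul_le_mul (by linarith) ?_ (by positivity) (by linarith)
      exact pow_le_pow_left₀ hLm.le hLmn 2
  have hsum2 : Summable (fun k : ℕ => 4 / (Real.log 2 ^ 2 * ((k:ℝ) + 1) ^ 2)) := by
    have h0 : Summable (fun k : ℕ => 1 / ((k:ℝ)) ^ 2) :=
      Real.summable_one_div_nat_pow.mpr one_lt_two
    have h1 : Summable (fun k : ℕ => 1 / ((k:ℝ) + 1) ^ 2) := by
      have := (summable_nat_add_iff 1).2 h0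
      apply this.congr
      intro k; push_cast; ring_nf
    have := h1.mul_left (4 / Real.log 2 ^ 2)
    apply this.congr
    intro k
    field_simp
  have hcond : Summable (fun k : ℕ => (2:ℝ) ^ k * f (2 ^ k)) := by
    apply Summable.of_nonneg_of_le ?_ ?_ hsum2
    · intro k
      have := hnonneg (2 ^ k)
      positivity
    · intro k
      have hc : (((2:ℕ) ^ k : ℕ) : ℝ) = (2:ℝ) ^ k := by push_cast; ring
      have h2k : (0:ℝ) < (2:ℝ) ^ k := by positivity
      set L := Real.log ((2:ℝ) ^ k + 1) with hL
      have hLpos : 0 < L := Real.log_pos (by linarith)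
      have hlog2 : 0 < Real.log 2 := Real.log_pos one_lt_two
      have hlog : ((k:ℝ) + 1) * Real.log 2 ≤ 2 * L := by
        have l1 : Real.log ((2:ℝ) ^ k) ≤ L := Real.log_le_log (by positivity) (by linarith)
        rw [Real.log_pow] at l1
        have l2 : Real.log 2 ≤ L := by
          apply Real.log_le_log (by norm_num)
          have : (1:ℝ) ≤ 2 ^ k := one_le_pow₀ one_le_two
          linarith
        push_cast at l1 ⊢
        linarith
      have hfval : f (2 ^ k) = 1 / (((2:ℝ) ^ k + 1) * L ^ 2) := by
        simp only [hf, hc, hL]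
      have hsq : (((k:ℝ) + 1) * Real.log 2) ^ 2 ≤ (2 * L) ^ 2 :=
        pow_le_pow_left₀ (by positivity) hlog 2
      rw [hfval, mul_one_div, div_le_div_iff₀ (by positivity) (by positivity)]
      calc (2:ℝ) ^ k * (Real.log 2 ^ 2 * ((k:ℝ) + 1) ^ 2)
          = 2 ^ k * (((k:ℝ) + 1) * Real.log 2) ^ 2 := by ring
        _ ≤ 2 ^ k * (2 * L) ^ 2 := by
            exact mul_le_mul_of_nonneg_left hsq h2k.le
        _ = 4 * (2 ^ k * L ^ 2) := by ring
        _ ≤ 4 * ((2 ^ k + 1) * L ^ 2) := by nlinarith [sq_nonneg L]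
  have hs : Summable f := (summable_condensed_iff_of_nonneg hnonneg hmono).1 hcond
  have := (summable_nat_add_iff 1).2 hs
  apply this.congr
  intro n
  simp only [hf, motherSeq]
  push_cast
  ring_nf

lemma not_summable_motherSeq_rpow {s : ℝ} (hs0 : 0 < s) (hs1 : s < 1) :
    ¬ Summable (fun n : ℕ => motherSeq n ^ s) := by
  intro h
  set r : ℝ := 1 / s - 1 with hr
  have hrpos : 0 < r := by
    rw [hr]
    have : 1 < 1 / s := by rw [lt_div_iff₀ hs0]; linarith
    linarith
  set ε : ℝ := r / 4 with hε
  have hεpos : 0 < ε := by positivity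
  have key : ∀ᶠ n : ℕ in atTop, 1 / ((n:ℝ) + 2) ≤ motherSeq n ^ s := by
    have htend : Tendsto (fun n : ℕ => ((n:ℝ) + 2) ^ (2 * ε)) atTop atTop :=
      (tendsto_rpow_atTop (by positivity)).comp
        (tendsto_atTop_add_const_right atTop 2 tendsto_natCast_atTop_atTop)
    filter_upwards [htend.eventually_ge_atTop (ε⁻¹ ^ 2)] with n hn
    set m : ℝ := (n:ℝ) + 2 with hm
    have hn0 : (0:ℝ) ≤ (n:ℝ) := n.cast_nonneg
    have hm2 : (2:ℝ) ≤ m := by rw [hm]; linarith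
    have hm0 : (0:ℝ) < m := by linarith
    set L := Real.log m with hLd
    have hL0 : 0 ≤ L := Real.log_nonneg (by linarith)
    -- L² ≤ m^r
    have hstep1 : L ^ 2 ≤ m ^ (2 * ε) * ε⁻¹ ^ 2 := by
      have h1 : L ≤ m ^ ε / ε := log_le_rpow_div' hm0 hεpos
      have h2 : L ^ 2 ≤ (m ^ ε / ε) ^ 2 := pow_le_pow_left₀ hL0 h1 2
      have e1 : (m ^ ε) ^ (2:ℕ) = m ^ (2 * ε) := by
        rw [← Real.rpow_natCast (m ^ ε) 2, ← Real.rpow_mul hm0.le, mul_comm]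
        norm_num
      have h3 : (m ^ ε / ε) ^ 2 = m ^ (2 * ε) * ε⁻¹ ^ 2 := by
        rw [div_pow, e1, div_eq_mul_inv, inv_pow]
      rw [h3] at h2
      exact h2
    have hstep2 : L ^ 2 ≤ m ^ r := by
      calc L ^ 2 ≤ m ^ (2 * ε) * ε⁻¹ ^ 2 := hstep1
        _ ≤ m ^ (2 * ε) * m ^ (2 * ε) := by
            apply mul_le_mul_of_nonneg_left hn (Real.rpow_nonneg hm0.le _)
        _ = m ^ (2 * ε + 2 * ε) := (Real.rpow_add hm0 _ _).symm
        _ = m ^ r := by rw [hε]; congr 1; ring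
    have hstep3 : m * L ^ 2 ≤ m ^ (1 / s) := by
      calc m * L ^ 2 ≤ m * m ^ r := by nlinarith
        _ = m ^ (1 + r) := by rw [Real.rpow_add hm0, Real.rpow_one]
        _ = m ^ (1 / s) := by rw [hr]; congr 1; ring
    have hstep4 : (m * L ^ 2) ^ s ≤ m := by
      calc (m * L ^ 2) ^ s ≤ (m ^ (1 / s)) ^ s :=
            Real.rpow_le_rpow (by positivity) hstep3 hs0.le
        _ = m ^ ((1 / s) * s) := by rw [← Real.rpow_mul hm0.le]
        _ = m := by rw [one_div, inv_mul_cancel₀ hs0.ne', Real.rpow_one]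
    have hML : 0 < m * L ^ 2 := by
      have hL1 : 0 < L := Real.log_pos (by linarith)
      positivity
    have : motherSeq n ^ s = 1 / (m * L ^ 2) ^ s := by
      unfold motherSeq
      rw [← hm, ← hLd, one_div, one_div, Real.inv_rpow hML.le]
    rw [this]
    apply one_div_le_one_div_of_le (Real.rpow_pos_of_pos hML s)
    exact hstep4
  obtain ⟨N, hN⟩ := eventually_atTop.1 key
  have h2 : Summable (fun n : ℕ => motherSeq (n + N) ^ s) := (summable_nat_add_iff N).2 h
  have h3 : Summable (fun n : ℕ => 1 / ((n:ℝ) + ((N:ℝ) + 2))) := by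
    apply Summable.of_nonneg_of_le (fun n => by positivity) ?_ h2
    intro n
    have := hN (n + N) (Nat.le_add_left N n)
    push_cast at this ⊢
    calc 1 / ((n:ℝ) + ((N:ℝ) + 2)) = 1 / (((n:ℝ) + (N:ℝ)) + 2) := by ring_nf
      _ ≤ motherSeq (n + N) ^ s := by push_cast at this; exact this
  have h4 := (Real.summable_one_div_nat_add_rpow ((N:ℝ) + 2) 1).1 ?_
  · exact absurd h4 (lt_irrefl 1)
  · apply h3.congr
    intro n
    rw [Real.rpow_one, abs_of_nonneg (by positivity)]

lemma exists_mother {p : ℝ} (hp : 0 < p) :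
    ∃ x : ℕ → ℝ, (∀ t, 0 < x t) ∧ Summable (fun t => |x t| ^ p) ∧
      ∀ q : ℝ, 0 < q → q < p → ¬ Summable (fun t => |x t| ^ q) := by
  refine ⟨fun n => motherSeq n ^ (1 / p), fun t => Real.rpow_pos_of_pos (motherSeq_pos t) _,
    ?_, ?_⟩
  · have : (fun t => |motherSeq t ^ (1 / p)| ^ p) = motherSeq := by
      funext t
      rw [abs_of_pos (Real.rpow_pos_of_pos (motherSeq_pos t) _),
        ← Real.rpow_mul (motherSeq_pos t).le, one_div, inv_mul_cancel₀ hp.ne',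
        Real.rpow_one]
    rw [this]; exact summable_motherSeq
  · intro q hq hqp hsum
    have hs0 : 0 < q / p := div_pos hq hp
    have hs1 : q / p < 1 := (div_lt_one hp).2 hqp
    apply not_summable_motherSeq_rpow hs0 hs1
    apply hsum.congr
    intro t
    rw [abs_of_pos (Real.rpow_pos_of_pos (motherSeq_pos t) _),
      ← Real.rpow_mul (motherSeq_pos t).le, div_mul_eq_mul_div, one_mul]

lemma pow_rpow_comm {r q : ℝ} (hr : 0 ≤ r) (m : ℕ) : (r ^ m) ^ q = (r ^ q) ^ m := by
  rw [← Real.rpow_natCast r m, ← Real.rpow_mul hr, mul_comm, Real.rpow_mul hr,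
    Real.rpow_natCast]

/-- The closed "spread" submodule built from mother vector `x` along blocks `β`. -/
def Zmod (p : ℝ) (hp : 0 < p) (x : ℕ → ℝ) (β : ℕ × ℕ → ℕ) : Submodule ℝ (ℕ → ℝ) where
  carrier := {y | MemSeqLp p y ∧ (∀ j, j ∉ Set.range β → y j = 0) ∧
    ∀ m t t', y (β (m, t)) * x t' = y (β (m, t')) * x t}
  zero_mem' := ⟨memSeqLp_zero hp, fun j _ => rfl, fun m t t' => by simp⟩
  add_mem' := by
    rintro a b ⟨ha1, ha2, ha3⟩ ⟨hb1, hb2, hb3⟩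
    refine ⟨ha1.add hp hb1, fun j hj => ?_, fun m t t' => ?_⟩
    · simp [ha2 j hj, hb2 j hj]
    · have h1 := ha3 m t t'
      have h2 := hb3 m t t'
      simp only [Pi.add_apply]
      linear_combination h1 + h2
  smul_mem' := by
    rintro c a ⟨ha1, ha2, ha3⟩
    refine ⟨ha1.smul c, fun j hj => ?_, fun m t t' => ?_⟩
    · simp [ha2 j hj]
    · have h1 := ha3 m t t'
      simp only [Pi.smul_apply, smul_eq_mul]
      linear_combination c * h1

lemma Zmod_block {p : ℝ} {hp : 0 < p} {x : ℕ → ℝ} {β : ℕ × ℕ → ℕ}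
    (hx : ∀ t, 0 < x t) {z : ℕ → ℝ} (hz : z ∈ Zmod p hp x β) (m t : ℕ) :
    z (β (m, t)) = (z (β (m, 0)) / x 0) * x t := by
  have h := hz.2.2 m t 0
  have hx0 : x 0 ≠ 0 := (hx 0).ne'
  field_simp
  linear_combination h

lemma exotic_of_add {p : ℝ} (hp : 0 < p) {x : ℕ → ℝ} {β : ℕ × ℕ → ℕ}
    (hx : ∀ t, 0 < x t)
    (hxq : ∀ q : ℝ, 0 < q → q < p → ¬ Summable fun t => |x t| ^ q)
    (hβ : Function.Injective β)
    {u : ℕ → ℝ} (hu1 : MemSeqLp p u)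
    (hu2 : ∀ q : ℝ, 0 < q → ∀ m : ℕ, Summable fun t => |u (β (m, t))| ^ q)
    {z : ℕ → ℝ} (hz : z ∈ Zmod p hp x β) (hzne : z ≠ 0) :
    (u + z) ∈ ExoticSet p := by
  refine ⟨hu1.add hp hz.1, fun q hq hqp hsum => ?_⟩
  -- find a block where z is a nonzero multiple of x
  obtain ⟨j, hj⟩ : ∃ j, z j ≠ 0 := by
    by_contra hcon
    push_neg at hcon
    exact hzne (funext hcon)
  have hjrange : j ∈ Set.range β := by
    by_contra hcon
    exact hj (hz.2.1 j hcon)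
  obtain ⟨⟨m, t⟩, rfl⟩ := hjrange
  set a : ℝ := z (β (m, 0)) / x 0 with ha
  have hane : a ≠ 0 := by
    intro hcon
    apply hj
    rw [Zmod_block hx hz m t, ← ha, hcon, zero_mul]
  have hblock : ∀ t', z (β (m, t')) = a * x t' := fun t' => Zmod_block hx hz m t'
  have hinj : Function.Injective (fun t' : ℕ => β (m, t')) := by
    intro t1 t2 h
    have := hβ h
    simpa using this
  have h1 : Summable fun t' => |(u + z) (β (m, t'))| ^ q := by
    have := Summable.comp_injective hsum hinj
    exact this
  have h2 : Summable fun t' => |u (β (m, t'))| ^ q := hu2 q hq m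
  have h3 : Summable fun t' => |a * x t'| ^ q := by
    apply Summable.of_nonneg_of_le (fun t' => Real.rpow_nonneg (abs_nonneg _) _)
      (fun t' => ?_) (((Summable.add h1 h2).mul_left ((2:ℝ) ^ q)))
    have : a * x t' = (u + z) (β (m, t')) + (-(u (β (m, t')))) := by
      simp only [Pi.add_apply]
      rw [hblock t']
      ring
    rw [this]
    calc |(u + z) (β (m, t')) + (-(u (β (m, t'))))| ^ q
        ≤ 2 ^ q * (|(u + z) (β (m, t'))| ^ q + |(-(u (β (m, t'))))| ^ q) :=
          abs_add_rpow_le hq _ _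
      _ = 2 ^ q * (|(u + z) (β (m, t'))| ^ q + |u (β (m, t'))| ^ q) := by rw [abs_neg]
  have h4 : Summable fun t' => |x t'| ^ q := by
    have heq : ∀ t', |a * x t'| ^ q = |a| ^ q * |x t'| ^ q := by
      intro t'
      rw [abs_mul, Real.mul_rpow (abs_nonneg _) (abs_nonneg _)]
    have h5 := h3.mul_left ((|a| ^ q)⁻¹)
    apply h5.congr
    intro t'
    rw [heq t', inv_mul_cancel_left₀]
    exact (Real.rpow_pos_of_pos (abs_pos.2 hane) q).ne'
  exact hxq q hq hqp h4

/-- Geometric spread vectors. -/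
noncomputable def geomVec (x : ℕ → ℝ) (β : ℕ × ℕ → ℕ) (r : ℝ) : ℕ → ℝ :=
  Function.extend β (fun mt => r ^ mt.1 * x mt.2) 0

lemma geomVec_apply {x : ℕ → ℝ} {β : ℕ × ℕ → ℕ} (hβ : Function.Injective β)
    (r : ℝ) (m t : ℕ) : geomVec x β r (β (m, t)) = r ^ m * x t :=
  hβ.extend_apply _ _ (m, t)

lemma geomVec_apply' {x : ℕ → ℝ} {β : ℕ × ℕ → ℕ} (r : ℝ) {j : ℕ}
    (hj : j ∉ Set.range β) : geomVec x β r j = 0 := by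
  unfold geomVec
  rw [Function.extend_apply' _ _ _ (by simpa [Set.range] using hj)]
  rfl

lemma geomVec_mem {p : ℝ} (hp : 0 < p) {x : ℕ → ℝ} {β : ℕ × ℕ → ℕ}
    (hx : ∀ t, 0 < x t) (hxp : Summable fun t => |x t| ^ p)
    (hβ : Function.Injective β) {r : ℝ} (hr : r ∈ Set.Ioo (0:ℝ) 1) :
    geomVec x β r ∈ Zmod p hp x β := by
  obtain ⟨hr0, hr1⟩ := hr
  refine ⟨?_, fun j hj => geomVec_apply' r hj, fun m t t' => ?_⟩
  · have hsum : Summable fun mt : ℕ × ℕ => ((r ^ p) ^ mt.1) * (|x mt.2| ^ p) := by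
      refine Summable.mul_of_nonneg ?_ hxp ?_ ?_
      · exact summable_geometric_of_lt_one (Real.rpow_nonneg hr0.le p)
          (Real.rpow_lt_one hr0.le hr1 hp)
      · exact fun m' => by positivity
      · exact fun t' => Real.rpow_nonneg (abs_nonneg _) _
    rw [MemSeqLp, ← Function.Injective.summable_iff hβ ?_]
    · apply hsum.congr
      rintro ⟨m, t⟩
      have hpos : 0 < r ^ m * x t := mul_pos (pow_pos hr0 m) (hx t)
      simp only [Function.comp_apply, geomVec_apply hβ]
      rw [abs_of_pos hpos, Real.mul_rpow (pow_pos hr0 m).le (hx t).le,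
        pow_rpow_comm hr0.le, abs_of_pos (hx t)]
    · intro j hj
      rw [geomVec_apply' r hj, abs_zero, Real.zero_rpow hp.ne']
  · rw [geomVec_apply hβ, geomVec_apply hβ]
    ring

lemma geomVec_linearIndependent {x : ℕ → ℝ} {β : ℕ × ℕ → ℕ}
    (hx : ∀ t, 0 < x t) (hβ : Function.Injective β) :
    LinearIndependent ℝ (fun r : Set.Ioo (0:ℝ) 1 => geomVec x β (r : ℝ)) := by
  rw [linearIndependent_iff']
  intro s g hsum i hi
  have hev : ∀ M : ℕ, ∑ rr ∈ s, g rr * (rr : ℝ) ^ M = 0 := by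
    intro M
    have h0 := congrFun hsum (β (M, 0))
    simp only [Finset.sum_apply, Pi.smul_apply, smul_eq_mul, Pi.zero_apply] at h0
    have h1 : ∑ rr ∈ s, g rr * ((rr : ℝ) ^ M * x 0) = 0 := by
      refine Eq.trans ?_ h0
      apply Finset.sum_congr rfl
      intro rr _
      rw [geomVec_apply hβ]
    have h2 : (∑ rr ∈ s, g rr * (rr : ℝ) ^ M) * x 0 = 0 := by
      refine Eq.trans (Finset.sum_mul _ _ _) (Eq.trans ?_ h1)
      apply Finset.sum_congr rfl
      intro rr _
      ring
    exact (mul_eq_zero.1 h2).resolve_right (hx 0).ne'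
  -- Vandermonde argument
  set N := s.card with hN
  set e : ↥s ≃ Fin N := s.equivFin with he
  set fv : Fin N → ℝ := fun k => ((e.symm k : ↥s) : Set.Ioo (0:ℝ) 1) with hfv
  have hfinj : Function.Injective fv := by
    intro k1 k2 h
    apply e.symm.injective
    apply Subtype.ext
    apply Subtype.ext
    exact h
  set cv : Fin N → ℝ := fun k => g (e.symm k) with hcv
  have hzero : cv = 0 := by
    apply Matrix.eq_zero_of_forall_pow_sum_mul_pow_eq_zero hfinj
    intro i'
    calc ∑ j : Fin N, cv j * fv j ^ (i' : ℕ)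
        = ∑ a : ↥s, g (a : Set.Ioo (0:ℝ) 1) * ((a : Set.Ioo (0:ℝ) 1) : ℝ) ^ (i' : ℕ) := by
          refine (Fintype.sum_equiv e _ _ fun a => ?_).symm
          simp [hcv, hfv]
      _ = ∑ rr ∈ s, g rr * (rr : ℝ) ^ (i' : ℕ) :=
          Finset.sum_coe_sort s (fun rr => g rr * (rr : ℝ) ^ (i' : ℕ))
      _ = 0 := hev _
  have : cv (e ⟨i, hi⟩) = 0 := by rw [hzero]; rfl
  simpa [hcv] using this

/-- A finite separating coordinate set for a finite-dimensional space of sequences. -/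
lemma exists_finset_sep (W : Submodule ℝ (ℕ → ℝ)) [FiniteDimensional ℝ ↥W] :
    ∃ F : Finset ℕ, ∀ u ∈ W, (∀ j ∈ F, u j = 0) → u = 0 := by
  set K : Finset ℕ → Submodule ℝ ↥W :=
    fun F => ⨅ j ∈ F, LinearMap.ker ((LinearMap.proj j).comp W.subtype) with hK
  have memK : ∀ (F : Finset ℕ) (u : ↥W), u ∈ K F ↔ ∀ j ∈ F, (u : ℕ → ℝ) j = 0 := by
    intro F u
    simp [hK, Submodule.mem_iInf, LinearMap.mem_ker]
  have hne : (Set.range fun F => Module.finrank ℝ ↥(K F)).Nonempty := ⟨_, ⟨∅, rfl⟩⟩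
  obtain ⟨F₀, hF₀⟩ := Nat.sInf_mem hne
  refine ⟨F₀, fun u hu hvan => ?_⟩
  have hbot : K F₀ = ⊥ := by
    by_contra hcon
    obtain ⟨v, hv, hvne⟩ := Submodule.exists_mem_ne_zero_of_ne_bot hcon
    have hvfun : (v : ℕ → ℝ) ≠ 0 := fun h => hvne (Subtype.ext h)
    obtain ⟨j, hj⟩ : ∃ j, (v : ℕ → ℝ) j ≠ 0 := by
      by_contra hc
      push_neg at hc
      exact hvfun (funext hc)
    have hlt : K (insert j F₀) < K F₀ := by
      refine lt_of_le_of_ne ?_ ?_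
      · intro a ha
        rw [memK] at ha ⊢
        exact fun j' hj' => ha j' (Finset.mem_insert_of_mem hj')
      · intro heq
        have : v ∈ K (insert j F₀) := heq ▸ hv
        rw [memK] at this
        exact hj (this j (Finset.mem_insert_self j F₀))
    have hrk := Submodule.finrank_lt_finrank_of_lt hlt
    simp only at hF₀
    rw [hF₀] at hrk
    have hmem : Module.finrank ℝ ↥(K (insert j F₀)) ∈
        Set.range fun F => Module.finrank ℝ ↥(K F) := ⟨insert j F₀, rfl⟩
    have := Nat.sInf_le hmem
    omega
  have : (⟨u, hu⟩ : ↥W) ∈ K F₀ := (memK F₀ _).2 hvan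
  rw [hbot, Submodule.mem_bot] at this
  exact congrArg Subtype.val this

lemma tendsto_abs_of_memSeqLp {p : ℝ} (hp : 0 < p) {u : ℕ → ℝ} (hu : MemSeqLp p u) :
    Tendsto (fun j => |u j|) atTop (𝓝 0) := by
  have h1 : Tendsto (fun j => |u j| ^ p) atTop (𝓝 0) := hu.tendsto_atTop_zero
  have h2 := ((Real.continuousAt_rpow_const 0 p⁻¹ (Or.inr (by positivity))).tendsto.comp h1)
  rw [Real.zero_rpow (by positivity)] at h2
  apply h2.congr
  intro j
  simp only [Function.comp_apply]
  rw [← Real.rpow_mul (abs_nonneg _), mul_inv_cancel₀ hp.ne', Real.rpow_one]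

/-- Extraction of a rapidly-thinning strictly monotone index sequence avoiding `F`. -/
lemma exists_alpha (F : Finset ℕ) {N : ℕ} (w : Fin N → ℕ → ℝ)
    (hw : ∀ i, Tendsto (fun j => |w i j|) atTop (𝓝 0)) :
    ∃ α : ℕ → ℕ, StrictMono α ∧ (∀ k, α k ∉ F) ∧
      ∀ i k, |w i (α k)| ≤ (2:ℝ)⁻¹ ^ k := by
  have key : ∀ k M : ℕ, ∃ m, M < m ∧ m ∉ F ∧ ∀ i, |w i m| ≤ (2:ℝ)⁻¹ ^ k := by
    intro k M
    have h1 : ∀ᶠ m in atTop, ∀ i, |w i m| ≤ (2:ℝ)⁻¹ ^ k := by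
      rw [eventually_all]
      intro i
      exact (hw i).eventually_le_const (by positivity)
    have h2 : ∀ᶠ m in atTop, m ∉ F := by
      rw [eventually_atTop]
      refine ⟨F.sup id + 1, fun m hm hmF => ?_⟩
      have := Finset.le_sup (f := id) hmF
      simp only [id] at this
      omega
    have h3 : ∀ᶠ m in atTop, M < m := eventually_gt_atTop M
    obtain ⟨m, hm⟩ := ((h3.and h2).and h1).exists
    exact ⟨m, hm.1.1, hm.1.2, hm.2⟩
  choose step hstep1 hstep2 hstep3 using key
  refine ⟨fun k => Nat.rec (step 0 0) (fun k ih => step (k + 1) ih) k,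
    strictMono_nat_of_lt_succ (fun k => hstep1 (k + 1) _), fun k => ?_, fun i k => ?_⟩
  · cases k with
    | zero => exact hstep2 0 0
    | succ k => exact hstep2 (k + 1) _
  · cases k with
    | zero => exact hstep3 0 0 i
    | succ k => exact hstep3 (k + 1) _ i

lemma summable_small_comb {q : ℝ} (hq : 0 < q) {N : ℕ} (w : Fin N → ℕ → ℝ) (α : ℕ → ℕ)
    (hsmall : ∀ i k, |w i (α k)| ≤ (2:ℝ)⁻¹ ^ k) (c : Fin N → ℝ) :
    Summable fun k => |∑ i, c i * w i (α k)| ^ q := by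
  set C : ℝ := (∑ i, |c i|) + 1 with hC
  have hC1 : 1 ≤ C := by
    have : 0 ≤ ∑ i, |c i| := Finset.sum_nonneg fun i _ => abs_nonneg _
    simp [hC]; linarith
  have hC0 : 0 < C := by linarith
  have habs : ∀ k, |∑ i, c i * w i (α k)| ≤ C * (2:ℝ)⁻¹ ^ k := by
    intro k
    calc |∑ i, c i * w i (α k)| ≤ ∑ i, |c i * w i (α k)| := Finset.abs_sum_le_sum_abs _ _
      _ ≤ ∑ i, |c i| * (2:ℝ)⁻¹ ^ k := by
          apply Finset.sum_le_sum
          intro i _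
          rw [abs_mul]
          exact mul_le_mul_of_nonneg_left (hsmall i k) (abs_nonneg _)
      _ = (∑ i, |c i|) * (2:ℝ)⁻¹ ^ k := (Finset.sum_mul _ _ _).symm
      _ ≤ C * (2:ℝ)⁻¹ ^ k := by
          apply mul_le_mul_of_nonneg_right (by linarith) (by positivity)
  have hgeom : Summable fun k : ℕ => C ^ q * (((2:ℝ)⁻¹ ^ q) ^ k) := by
    apply Summable.mul_left
    apply summable_geometric_of_lt_one (Real.rpow_nonneg (by norm_num) q)
    apply Real.rpow_lt_one (by norm_num) (by norm_num) hq
  apply Summable.of_nonneg_of_le (fun k => Real.rpow_nonneg (abs_nonneg _) _) ?_ hgeom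
  intro k
  calc |∑ i, c i * w i (α k)| ^ q ≤ (C * (2:ℝ)⁻¹ ^ k) ^ q :=
        Real.rpow_le_rpow (abs_nonneg _) (habs k) hq.le
    _ = C ^ q * (((2:ℝ)⁻¹ ^ q) ^ k) := by
        rw [Real.mul_rpow hC0.le (by positivity), pow_rpow_comm (by norm_num)]

lemma tendsto_pointwise_of_lp {p : ℝ} (hp : 0 < p) {g : ℕ → ℕ → ℝ} {w : ℕ → ℝ}
    (hgs : ∀ k, MemSeqLp p (g k)) (hws : MemSeqLp p w) (ht : LpTendsto p g w) (j : ℕ) :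
    Tendsto (fun k => g k j) atTop (𝓝 (w j)) := by
  have hd : ∀ k, Summable fun i => |g k i - w i| ^ p := by
    intro k
    have := (hgs k).sub hp hws
    apply this.congr
    intro i
    rfl
  have hb : ∀ k, |g k j - w j| ^ p ≤ ∑' i, |g k i - w i| ^ p := by
    intro k
    exact Summable.le_tsum (hd k) j (fun i _ => Real.rpow_nonneg (abs_nonneg _) _)
  have h0 : Tendsto (fun k => |g k j - w j| ^ p) atTop (𝓝 0) :=
    tendsto_of_tendsto_of_tendsto_of_le_of_le tendsto_const_nhds ht
      (fun k => Real.rpow_nonneg (abs_nonneg _) _) hb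
  have h1 : Tendsto (fun k => |g k j - w j|) atTop (𝓝 0) := by
    have h2 := ((Real.continuousAt_rpow_const 0 p⁻¹ (Or.inr (by positivity))).tendsto.comp h0)
    rw [Real.zero_rpow (by positivity)] at h2
    apply h2.congr
    intro k
    simp only [Function.comp_apply]
    rw [← Real.rpow_mul (abs_nonneg _), mul_inv_cancel₀ hp.ne', Real.rpow_one]
  have h3 : Tendsto (fun k => g k j - w j) atTop (𝓝 0) :=
    (tendsto_zero_iff_abs_tendsto_zero _).2 h1
  have := h3.add_const (w j)
  simpa using this


lemma rank_le_continuum (W' : Submodule ℝ (ℕ → ℝ)) :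
    Module.rank ℝ ↥W' ≤ Cardinal.continuum := by
  have h1 : Module.rank ℝ ↥W' ≤ Module.rank ℝ (ℕ → ℝ) := Submodule.rank_le W'
  have h2 : Module.rank ℝ (ℕ → ℝ) ≤ Cardinal.mk (ℕ → ℝ) := rank_le_card _ _
  have h3 : Cardinal.mk (ℕ → ℝ) = Cardinal.continuum := by
    rw [Cardinal.mk_arrow]
    simp only [Cardinal.mk_real, Cardinal.lift_id, Cardinal.mk_denumerable,
      Cardinal.lift_aleph0]
    exact Cardinal.continuum_power_aleph0
  exact h1.trans (h2.trans_eq h3)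

lemma continuum_le_rank_of_Zmod_le {p : ℝ} (hp : 0 < p) {x : ℕ → ℝ} {β : ℕ × ℕ → ℕ}
    (hx : ∀ t, 0 < x t) (hxp : Summable fun t => |x t| ^ p)
    (hβ : Function.Injective β) {W' : Submodule ℝ (ℕ → ℝ)}
    (hle : Zmod p hp x β ≤ W') : Cardinal.continuum ≤ Module.rank ℝ ↥W' := by
  set v : Set.Ioo (0:ℝ) 1 → ↥W' :=
    fun r => ⟨geomVec x β (r : ℝ), hle (geomVec_mem hp hx hxp hβ r.2)⟩ with hv
  have hli : LinearIndependent ℝ v := by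
    apply LinearIndependent.of_comp W'.subtype
    exact geomVec_linearIndependent hx hβ
  have := hli.cardinal_le_rank
  rwa [Cardinal.mk_Ioo_real (by norm_num : (0:ℝ) < 1)] at this


theorem stmt6 (p : ℝ) (hp : 0 < p) (n : ℕ) :
    (∃ W₀ : Submodule ℝ (ℕ → ℝ), Module.rank ℝ W₀ = n ∧
      (W₀ : Set (ℕ → ℝ)) ⊆ ExoticSet p ∪ {0}) ∧
    ∀ W : Submodule ℝ (ℕ → ℝ), Module.rank ℝ W = n →
      (W : Set (ℕ → ℝ)) ⊆ ExoticSet p ∪ {0} →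
      ∃ W' : Submodule ℝ (ℕ → ℝ), W ≤ W' ∧ LpClosed p W' ∧
        Module.rank ℝ W' = Cardinal.continuum ∧
        (W' : Set (ℕ → ℝ)) ⊆ ExoticSet p ∪ {0} := by
  obtain ⟨x, hx, hxp, hxq⟩ := exists_mother hp
  have hxq' : ∀ q : ℝ, 0 < q → q < p → ¬ MemSeqLp q x := hxq
  constructor
  · -- n-lineability
    set β : ℕ × ℕ → ℕ := fun mt => Nat.pairEquiv mt with hβd
    have hβ : Function.Injective β := Nat.pairEquiv.injective
    set r : Fin n → Set.Ioo (0:ℝ) 1 := fun i =>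
      ⟨((i:ℝ) + 1) / ((n:ℝ) + 1), by
        constructor
        · positivity
        · rw [div_lt_one (by positivity)]
          have : (i:ℝ) < (n:ℝ) := by exact_mod_cast i.2
          linarith⟩ with hrd
    have hrinj : Function.Injective r := by
      intro i1 i2 h
      have h1 : ((i1:ℝ) + 1) / ((n:ℝ) + 1) = ((i2:ℝ) + 1) / ((n:ℝ) + 1) := by
        have := congrArg (fun a => (a : Set.Ioo (0:ℝ) 1).1) h
        exact this
      have hn1 : ((n:ℝ) + 1) ≠ 0 := by positivity
      field_simp at h1
      exact Fin.ext (by have := add_right_cancel h1; exact_mod_cast this)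
    set v : Fin n → (ℕ → ℝ) := fun i => geomVec x β ((r i : ℝ)) with hvd
    have hli : LinearIndependent ℝ v :=
      (geomVec_linearIndependent hx hβ).comp r hrinj
    refine ⟨Submodule.span ℝ (Set.range v), ?_, ?_⟩
    · rw [rank_span hli, Cardinal.mk_range_eq v hli.injective, Cardinal.mk_fin]
    · intro z hz
      have hzZ : z ∈ Zmod p hp x β := by
        have hsub : Submodule.span ℝ (Set.range v) ≤ Zmod p hp x β := by
          rw [Submodule.span_le]
          rintro _ ⟨i, rfl⟩
          exact geomVec_mem hp hx hxp hβ (r i).2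
        exact hsub hz
      rcases eq_or_ne z 0 with h0 | h0
      · right; simp [h0]
      · left
        have := exotic_of_add hp hx hxq hβ (memSeqLp_zero hp)
          (fun q hq m => by
            simp only [Pi.zero_apply, abs_zero, Real.zero_rpow hq.ne']
            exact summable_zero) hzZ h0
        simpa using this
  · -- (n, c)-spaceability
    intro W hrank hW
    have hfd : FiniteDimensional ℝ ↥W := Module.finite_of_rank_eq_nat hrank
    have hmemW : ∀ u ∈ W, MemSeqLp p u := by
      intro u hu
      rcases hW hu with h | h
      · exact h.1
      · simp only [Set.mem_singleton_iff] at h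
        rw [h]; exact memSeqLp_zero hp
    obtain ⟨F, hF⟩ := exists_finset_sep W
    set N : ℕ := Module.finrank ℝ ↥W with hN
    set b : Module.Basis (Fin N) ℝ ↥W := Module.finBasis ℝ ↥W with hb
    set wv : Fin N → (ℕ → ℝ) := fun i => ((b i : ↥W) : ℕ → ℝ) with hwv
    have hwvmem : ∀ i, wv i ∈ W := fun i => (b i).2
    obtain ⟨α, hαmono, hαF, hαsmall⟩ := exists_alpha F wv
      (fun i => tendsto_abs_of_memSeqLp hp (hmemW _ (hwvmem i)))
    set β : ℕ × ℕ → ℕ := fun mt => α (Nat.pairEquiv mt) with hβd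
    have hβ : Function.Injective β :=
      hαmono.injective.comp Nat.pairEquiv.injective
    -- expansion of elements of W in the basis, and smallness along α
    have hexp : ∀ u, ∀ hu : u ∈ W, ∀ j : ℕ,
        u j = ∑ i, (b.repr ⟨u, hu⟩) i * wv i j := by
      intro u hu j
      have h1 : (⟨u, hu⟩ : ↥W) = ∑ i, (b.repr ⟨u, hu⟩) i • b i := (b.sum_repr _).symm
      have h2 := congrArg (fun v : ↥W => (v : ℕ → ℝ) j) h1
      simp only at h2
      rw [h2]
      rw [Submodule.coe_sum]
      rw [Finset.sum_apply]
      apply Finset.sum_congr rfl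
      intro i _
      simp [hwv]
    have hsmallW : ∀ u ∈ W, ∀ q : ℝ, 0 < q → ∀ m : ℕ,
        Summable fun t => |u (β (m, t))| ^ q := by
      intro u hu q hq m
      have h1 : Summable fun k => |u (α k)| ^ q := by
        have := summable_small_comb hq wv α hαsmall (fun i => (b.repr ⟨u, hu⟩) i)
        apply this.congr
        intro k
        rw [← hexp u hu (α k)]
      have h2 : Function.Injective (fun t : ℕ => Nat.pairEquiv (m, t)) := by
        intro t1 t2 h
        have := Nat.pairEquiv.injective h
        simpa using this
      exact h1.comp_injective h2
    set Z : Submodule ℝ (ℕ → ℝ) := Zmod p hp x β with hZd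
    refine ⟨W ⊔ Z, le_sup_left, ?_, ?_, ?_⟩
    · -- closedness
      intro g hg w hwp htend
      have hdec : ∀ k, ∃ u ∈ W, ∃ z ∈ Z, u + z = g k := fun k => Submodule.mem_sup.1 (hg k)
      choose u hu z hz huz using hdec
      have hgmem : ∀ k, MemSeqLp p (g k) := by
        intro k
        rw [← huz k]
        exact (hmemW _ (hu k)).add hp (hz k).1
      have hpt : ∀ j, Tendsto (fun k => g k j) atTop (𝓝 (w j)) :=
        tendsto_pointwise_of_lp hp hgmem hwp htend
      -- the left inverse
      set φ : ↥W →ₗ[ℝ] (↥F → ℝ) :=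
        LinearMap.pi (fun j : ↥F => (LinearMap.proj (j : ℕ)).comp W.subtype) with hφd
      have hφinj : LinearMap.ker φ = ⊥ := by
        rw [LinearMap.ker_eq_bot']
        intro v hv
        apply Subtype.ext
        apply hF (v : ℕ → ℝ) v.2
        intro j hj
        exact congrFun hv ⟨j, hj⟩
      obtain ⟨ψ, hψ⟩ := φ.exists_leftInverse_of_injective hφinj
      have hψφ : ∀ v : ↥W, ψ (φ v) = v := by
        intro v
        have := congrArg (fun f : ↥W →ₗ[ℝ] ↥W => f v) hψ
        exact this
      have hFβ : ∀ j ∈ F, j ∉ Set.range β := by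
        intro j hj hcon
        obtain ⟨mt, rfl⟩ := hcon
        exact hαF _ hj
      have hzF : ∀ k, ∀ j ∈ F, z k j = 0 := fun k j hj => (hz k).2.1 j (hFβ j hj)
      have hu_eq : ∀ k, u k = ((ψ (fun j : ↥F => g k (j : ℕ)) : ↥W) : ℕ → ℝ) := by
        intro k
        have h1 : (fun j : ↥F => g k (j : ℕ)) = φ ⟨u k, hu k⟩ := by
          funext j
          have h2 : g k (j : ℕ) = u k (j : ℕ) + z k (j : ℕ) := by
            rw [← huz k]; rfl
          rw [h2, hzF k j j.2, add_zero]
          rfl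
        rw [h1, hψφ]
      -- expansion of ψ
      have hψ_expand : ∀ (vv : ↥F → ℝ) (j' : ℕ),
          ((ψ vv : ↥W) : ℕ → ℝ) j' =
            ∑ j : ↥F, vv j * ((ψ (fun j'' : ↥F => if j = j'' then (1:ℝ) else 0) : ↥W) : ℕ → ℝ) j' := by
        intro vv j'
        have h1 : vv = ∑ j : ↥F, vv j • fun j'' : ↥F => if j = j'' then (1:ℝ) else 0 :=
          pi_eq_sum_univ vv
        rw [h1]
        rw [map_sum]
        rw [Submodule.coe_sum, Finset.sum_apply]
        apply Finset.sum_congr rfl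
        intro j _
        rw [map_smul]
        simp
      set uLim : ↥W := ψ (fun j : ↥F => w (j : ℕ)) with huLim
      have hupt : ∀ j' : ℕ, Tendsto (fun k => u k j') atTop (𝓝 ((uLim : ℕ → ℝ) j')) := by
        intro j'
        have h1 : ∀ k, u k j' = ∑ j : ↥F, g k (j : ℕ) *
            ((ψ (fun j'' : ↥F => if j = j'' then (1:ℝ) else 0) : ↥W) : ℕ → ℝ) j' := by
          intro k
          rw [hu_eq k, hψ_expand]
        have h2 : (uLim : ℕ → ℝ) j' = ∑ j : ↥F, w (j : ℕ) *
            ((ψ (fun j'' : ↥F => if j = j'' then (1:ℝ) else 0) : ↥W) : ℕ → ℝ) j' := by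
          rw [huLim, hψ_expand]
        rw [h2]
        apply Tendsto.congr (fun k => (h1 k).symm)
        apply tendsto_finset_sum
        intro j _
        exact (hpt (j : ℕ)).mul_const _
      have hzpt : ∀ j' : ℕ, Tendsto (fun k => z k j') atTop (𝓝 ((w - (uLim : ℕ → ℝ)) j')) := by
        intro j'
        have h1 : ∀ k, z k j' = g k j' - u k j' := by
          intro k
          rw [← huz k]
          simp
        simp only [Pi.sub_apply]
        apply Tendsto.congr (fun k => (h1 k).symm)
        exact (hpt j').sub (hupt j')
      have hzmem : (w - (uLim : ℕ → ℝ)) ∈ Z := by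
        refine ⟨hwp.sub hp (hmemW _ uLim.2), ?_, ?_⟩
        · intro j hj
          have h1 : Tendsto (fun k => z k j) atTop (𝓝 0) := by
            have : ∀ k, z k j = 0 := fun k => (hz k).2.1 j hj
            simp only [this]
            exact tendsto_const_nhds
          exact tendsto_nhds_unique (hzpt j) h1
        · intro m t t'
          have h1 : Tendsto (fun k => z k (β (m, t)) * x t') atTop
              (𝓝 ((w - (uLim : ℕ → ℝ)) (β (m, t)) * x t')) := (hzpt _).mul_const _
          have h2 : Tendsto (fun k => z k (β (m, t)) * x t') atTop
              (𝓝 ((w - (uLim : ℕ → ℝ)) (β (m, t')) * x t)) := by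
            have h3 : ∀ k, z k (β (m, t)) * x t' = z k (β (m, t')) * x t :=
              fun k => (hz k).2.2 m t t'
            simp only [h3]
            exact (hzpt _).mul_const _
          exact tendsto_nhds_unique h1 h2
      rw [show w = (uLim : ℕ → ℝ) + (w - (uLim : ℕ → ℝ)) by abel]
      exact Submodule.mem_sup.2 ⟨_, uLim.2, _, hzmem, rfl⟩
    · -- rank
      refine le_antisymm (rank_le_continuum _) ?_
      exact continuum_le_rank_of_Zmod_le hp hx hxp hβ le_sup_right
    · -- exoticness
      intro w' hw'
      obtain ⟨u, hu, z, hz, huz⟩ := Submodule.mem_sup.1 hw'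
      rcases eq_or_ne z 0 with h0 | h0
      · rw [← huz, h0, add_zero]
        exact hW hu
      · left
        rw [← huz]
        exact exotic_of_add hp hx hxq hβ (hmemW u hu)
          (fun q hq m => hsmallW u hu q hq m) hz h0
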